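/- Let σ : (0,∞) → [0,∞) be nonincreasing and integrable, let c > 0, and let A : {(x,y) : 0 ≤ x ≤ y} → ℝ be measurable with |A(x,y)| ≤ c·σ((x+y)/2) for all y ≥ x ≥ 0. Fix x ≥ 0. Then for every F ∈ L¹(2x,∞), the function z ↦ ∫_z^∞ A(x, v+x−z) F(v) dv belongs to L¹(2x,∞) and ∫_{2x}^∞ | ∫_z^∞ A(x, v+x−z) F(v) dv | dz ≤ 2c (∫_x^∞ σ(t) dt) · ∫_{2x}^∞ |F(v)| dv. -/

import Mathlib

open MeasureTheory Set Filter
open scoped Convolution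

/-- the operator `(BF)(z) = ∫_z^∞ A(x, v+x−z) F(v) dv` maps `L¹(2x,∞)`
into itself with norm bound `2c ∫_x^∞ σ(t) dt`, when `|A(x,y)| ≤ c σ((x+y)/2)`. -/
theorem B_operator_L1_bound
    (σ : ℝ → ℝ) (hσnn : ∀ t > (0 : ℝ), 0 ≤ σ t)
    (hσmono : AntitoneOn σ (Set.Ioi 0))
    (hσint : IntegrableOn σ (Set.Ioi 0))
    (c : ℝ) (hc : 0 < c)
    (A : ℝ → ℝ → ℝ) (hAmeas : Measurable (Function.uncurry A))
    (hAbound : ∀ x y : ℝ, 0 ≤ x → x ≤ y → |A x y| ≤ c * σ ((x + y) / 2))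
    (x : ℝ) (hx : 0 ≤ x) :
    ∀ F : ℝ → ℝ, IntegrableOn F (Set.Ioi (2 * x)) →
      IntegrableOn (fun z => ∫ v in Set.Ioi z, A x (v + x - z) * F v) (Set.Ioi (2 * x)) ∧
      (∫ z in Set.Ioi (2 * x), |∫ v in Set.Ioi z, A x (v + x - z) * F v|) ≤
        2 * c * (∫ t in Set.Ioi x, σ t) * ∫ v in Set.Ioi (2 * x), |F v| := by
  intro F hF
  set L : ℝ →L[ℝ] ℝ →L[ℝ] ℝ := ContinuousLinearMap.mul ℝ ℝ with hL
  -- the kernel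
  set k : ℝ → ℝ := (Set.Ioi (0:ℝ)).indicator (fun u => A x (u + x)) with hk
  set kneg : ℝ → ℝ := fun u => k (-u) with hkneg
  set Ft : ℝ → ℝ := (Set.Ioi (2*x)).indicator F with hFt
  -- measurability of the kernel
  have hkm : Measurable k := by
    apply Measurable.indicator _ measurableSet_Ioi
    exact hAmeas.comp (measurable_const.prodMk (measurable_id.add_const x))
  -- integrability of σ on Ioi x
  have hσx : IntegrableOn σ (Set.Ioi x) := hσint.mono_set (Set.Ioi_subset_Ioi hx)
  -- translation: the shifted indicator identity
  have hind : (fun t => ((Set.Ioi x).indicator σ) (x + t)) =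
      (Set.Ioi (0:ℝ)).indicator (fun t => σ (x + t)) := by
    funext t
    by_cases ht : (0:ℝ) < t
    · rw [Set.indicator_of_mem (by simpa using ht),
        Set.indicator_of_mem (Set.mem_Ioi.mpr ht)]
    · rw [Set.indicator_of_notMem (by simpa using ht),
        Set.indicator_of_notMem (by simpa using ht)]
  -- translation: integrability
  have hτ : IntegrableOn (fun t => σ (x + t)) (Set.Ioi 0) := by
    have h1 : Integrable ((Set.Ioi x).indicator σ) := by
      rwa [integrable_indicator_iff measurableSet_Ioi]
    have h2 : Integrable (fun t => ((Set.Ioi x).indicator σ) (x + t)) :=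
      h1.comp_add_left x
    rw [hind] at h2
    rwa [← integrable_indicator_iff measurableSet_Ioi]
  -- translation: integral value
  have hτval : (∫ t in Set.Ioi (0:ℝ), σ (x + t)) = ∫ t in Set.Ioi x, σ t := by
    rw [← integral_indicator measurableSet_Ioi, ← hind,
      integral_add_left_eq_self ((Set.Ioi x).indicator σ) x,
      integral_indicator measurableSet_Ioi]
  -- scaling: integrability of the dominating function
  have hdom : IntegrableOn (fun u => c * σ (x + (1/2) * u)) (Set.Ioi 0) := by
    apply Integrable.const_mul
    have := (integrableOn_Ioi_comp_mul_left_iff (fun t => σ (x + t)) 0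
      (by norm_num : (0:ℝ) < 1/2)).mpr (by simpa using hτ)
    have h' : IntegrableOn (fun u => σ (x + (1/2) * u)) (Set.Ioi 0) := by simpa using this
    exact h'
  -- scaling: integral value
  have hdomval : (∫ u in Set.Ioi (0:ℝ), σ (x + (1/2) * u)) = 2 * ∫ t in Set.Ioi x, σ t := by
    have := integral_comp_mul_left_Ioi (fun t => σ (x + t)) 0 (by norm_num : (0:ℝ) < 1/2)
    simp only [mul_zero] at this
    rw [this, hτval]
    norm_num
  -- integrability of the kernel, with norm bound
  have hkb : ∀ᵐ u ∂(volume.restrict (Set.Ioi (0:ℝ))),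
      ‖A x (u + x)‖ ≤ c * σ (x + (1/2) * u) := by
    filter_upwards [ae_restrict_mem measurableSet_Ioi] with u hu
    have h := hAbound x (u + x) hx (le_add_of_nonneg_left (le_of_lt hu))
    rw [Real.norm_eq_abs]
    calc |A x (u + x)| ≤ c * σ ((x + (u + x)) / 2) := h
    _ = c * σ (x + (1/2) * u) := by ring_nf
  have hki : Integrable k := by
    rw [hk, integrable_indicator_iff measurableSet_Ioi]
    exact Integrable.mono' hdom
      ((hAmeas.comp (measurable_const.prodMk
        (measurable_id.add_const x))).aestronglyMeasurable.restrict) hkb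
  have hknorm : (∫ u, |k u|) ≤ 2 * c * ∫ t in Set.Ioi x, σ t := by
    have habs : (fun u => |k u|) = (Set.Ioi (0:ℝ)).indicator (fun u => |A x (u + x)|) := by
      funext u
      by_cases hu : u ∈ Set.Ioi (0:ℝ)
      · rw [hk, Set.indicator_of_mem hu, Set.indicator_of_mem hu]
      · rw [hk, Set.indicator_of_notMem hu, Set.indicator_of_notMem hu, abs_zero]
    rw [habs, integral_indicator measurableSet_Ioi]
    have h1 : (∫ u in Set.Ioi (0:ℝ), |A x (u + x)|) ≤
        ∫ u in Set.Ioi (0:ℝ), c * σ (x + (1/2) * u) := by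
      apply integral_mono_ae _ hdom
      · filter_upwards [hkb] with u hu
        simpa using hu
      · have := hki.abs
        rw [habs, integrable_indicator_iff measurableSet_Ioi] at this
        exact this
    calc (∫ u in Set.Ioi (0:ℝ), |A x (u + x)|)
        ≤ ∫ u in Set.Ioi (0:ℝ), c * σ (x + (1/2) * u) := h1
      _ = c * ∫ u in Set.Ioi (0:ℝ), σ (x + (1/2) * u) := integral_const_mul c _
      _ = c * (2 * ∫ t in Set.Ioi x, σ t) := by rw [hdomval]
      _ = 2 * c * ∫ t in Set.Ioi x, σ t := by ring
  have hknegi : Integrable kneg := hki.comp_neg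
  have hknegnorm : (∫ u, |kneg u|) = ∫ u, |k u| := by
    simpa using integral_neg_eq_self (fun u => |k u|) volume
  have hFti : Integrable Ft := by
    rw [hFt, integrable_indicator_iff measurableSet_Ioi]; exact hF
  have hFtnorm : (∫ v, |Ft v|) = ∫ v in Set.Ioi (2*x), |F v| := by
    have habs : (fun v => |Ft v|) = (Set.Ioi (2*x)).indicator (fun v => |F v|) := by
      funext v
      by_cases hv : v ∈ Set.Ioi (2*x)
      · rw [hFt, Set.indicator_of_mem hv, Set.indicator_of_mem hv]
      · rw [hFt, Set.indicator_of_notMem hv, Set.indicator_of_notMem hv, abs_zero]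
    rw [habs, integral_indicator measurableSet_Ioi]
  -- key identity: for z > 2x, the operator equals a convolution
  have hkey : ∀ z ∈ Set.Ioi (2*x),
      (∫ v in Set.Ioi z, A x (v + x - z) * F v) = (Ft ⋆[L, volume] kneg) z := by
    intro z hz
    rw [MeasureTheory.convolution_def]
    have : ∀ t : ℝ, L (Ft t) (kneg (z - t)) =
        (Set.Ioi z).indicator (fun v => A x (v + x - z) * F v) t := by
      intro t
      by_cases ht : t ∈ Set.Ioi z
      · have ht2x : t ∈ Set.Ioi (2*x) := Set.mem_Ioi.mpr (lt_trans hz ht)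
        have htz : t - z ∈ Set.Ioi (0:ℝ) := by simpa using sub_pos.mpr (Set.mem_Ioi.mp ht)
        rw [Set.indicator_of_mem ht]
        simp only [hL, ContinuousLinearMap.mul_apply']
        rw [hFt, Set.indicator_of_mem ht2x, hkneg]
        simp only [neg_sub]
        rw [hk, Set.indicator_of_mem htz]
        have : t - z + x = t + x - z := by ring
        rw [this, mul_comm]
      · rw [Set.indicator_of_notMem ht]
        have : ¬ (0:ℝ) < t - z := by simpa using fun h => ht (Set.mem_Ioi.mpr (sub_pos.mp h))
        rw [hL]
        simp only [ContinuousLinearMap.mul_apply']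
        rw [hkneg]
        simp only [neg_sub]
        rw [hk, Set.indicator_of_notMem (by simpa using this), mul_zero]
    simp_rw [this]
    rw [integral_indicator measurableSet_Ioi]
  have hconv : Integrable (Ft ⋆[L, volume] kneg) := hFti.integrable_convolution L hknegi
  constructor
  · exact hconv.integrableOn.congr_fun (fun z hz => (hkey z hz).symm) measurableSet_Ioi
  · -- the bound
    have haF : Integrable (fun v => |Ft v|) := hFti.abs
    have hak : Integrable (fun u => |kneg u|) := hknegi.abs
    have habsconv : Integrable ((fun v => |Ft v|) ⋆[L, volume] (fun u => |kneg u|)) :=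
      haF.integrable_convolution L hak
    have hptbd : ∀ᵐ z, |(Ft ⋆[L, volume] kneg) z| ≤
        ((fun v => |Ft v|) ⋆[L, volume] (fun u => |kneg u|)) z := by
      filter_upwards [hFti.ae_convolution_exists L hknegi] with z hz
      rw [MeasureTheory.convolution_def, MeasureTheory.convolution_def]
      calc |∫ t, L (Ft t) (kneg (z - t))| ≤ ∫ t, |L (Ft t) (kneg (z - t))| := by
            simpa using norm_integral_le_integral_norm (fun t => L (Ft t) (kneg (z - t)))
        _ = ∫ t, L (|Ft t|) (|kneg (z - t)|) := by
            congr 1; funext t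
            simp only [hL, ContinuousLinearMap.mul_apply', abs_mul]
        _ = ∫ t, (L ((fun v => |Ft v|) t)) ((fun u => |kneg u|) (z - t)) := rfl
    have hstep1 : (∫ z in Set.Ioi (2*x), |∫ v in Set.Ioi z, A x (v + x - z) * F v|) =
        ∫ z in Set.Ioi (2*x), |(Ft ⋆[L, volume] kneg) z| := by
      apply setIntegral_congr_fun measurableSet_Ioi
      intro z hz
      dsimp only; rw [hkey z hz]
    have hstep2 : (∫ z in Set.Ioi (2*x), |(Ft ⋆[L, volume] kneg) z|) ≤
        ∫ z, |(Ft ⋆[L, volume] kneg) z| := by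
      apply setIntegral_le_integral hconv.abs
      filter_upwards with z using abs_nonneg _
    have hstep3 : (∫ z, |(Ft ⋆[L, volume] kneg) z|) ≤
        ∫ z, ((fun v => |Ft v|) ⋆[L, volume] (fun u => |kneg u|)) z :=
      integral_mono_ae hconv.abs habsconv hptbd
    have hstep4 : (∫ z, ((fun v => |Ft v|) ⋆[L, volume] (fun u => |kneg u|)) z) =
        (∫ v, |Ft v|) * (∫ u, |kneg u|) := by
      have := integral_convolution L haF hak
      simpa [hL, ContinuousLinearMap.mul_apply'] using this
    have hFnn : (0:ℝ) ≤ ∫ v in Set.Ioi (2*x), |F v| :=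
      integral_nonneg fun v => abs_nonneg _
    calc (∫ z in Set.Ioi (2 * x), |∫ v in Set.Ioi z, A x (v + x - z) * F v|)
        = ∫ z in Set.Ioi (2*x), |(Ft ⋆[L, volume] kneg) z| := hstep1
      _ ≤ ∫ z, |(Ft ⋆[L, volume] kneg) z| := hstep2
      _ ≤ (∫ v, |Ft v|) * (∫ u, |kneg u|) := le_of_le_of_eq hstep3 hstep4
      _ = (∫ v in Set.Ioi (2*x), |F v|) * (∫ u, |k u|) := by rw [hFtnorm, hknegnorm]
      _ ≤ (∫ v in Set.Ioi (2*x), |F v|) * (2 * c * ∫ t in Set.Ioi x, σ t) :=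
          mul_le_mul_of_nonneg_left hknorm hFnn
      _ = 2 * c * (∫ t in Set.Ioi x, σ t) * ∫ v in Set.Ioi (2 * x), |F v| := by ring
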